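/- Let C = Φ(𝒞) be a Z2Z4-linear code of binary length n = α+2β, where 𝒞 is a Z2Z4-additive code of type (α,β;γ,δ;κ). Then ker(C) ∈ {γ+δ, γ+δ+1, …, γ+2δ−2} ∪ {γ+2δ}; that is, γ+δ ≤ ker(C) ≤ γ+2δ and ker(C) ≠ γ+2δ−1. -/
import Mathlib


/-- The ambient group `Z2^α × Z4^β`, with componentwise ring structure
(so `u * v` is the componentwise product). -/
abbrev Amb (α β : ℕ) := (Fin α → ZMod 2) × (Fin β → ZMod 4)

/-- The binary space `Z2^α × (Z2²)^β ≅ Z2^(α+2β)`. -/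
abbrev Bin (α β : ℕ) := (Fin α → ZMod 2) × (Fin β → ZMod 2 × ZMod 2)

/-- The Gray map `φ : Z4 → Z2²` with `φ(0)=(0,0), φ(1)=(0,1), φ(2)=(1,1), φ(3)=(1,0)`. -/
def grayPair (y : ZMod 4) : ZMod 2 × ZMod 2 :=
  match y.val with
  | 0 => (0, 0)
  | 1 => (0, 1)
  | 2 => (1, 1)
  | _ => (1, 0)

/-- The extended Gray map `Φ : Z2^α × Z4^β → Z2^(α+2β)`. -/
def Phi {α β : ℕ} (u : Amb α β) : Bin α β :=
  (u.1, fun i => grayPair (u.2 i))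

/-- The kernel `K(C) = {x | x + C = C}` of a binary code. -/
def kernelK {α β : ℕ} (C : Set (Bin α β)) : Set (Bin α β) :=
  {x | (fun y => x + y) '' C = C}

/-- The rank of a binary code: the `Z2`-dimension of its linear span. -/
noncomputable def rankOf {α β : ℕ} (C : Set (Bin α β)) : ℕ :=
  Module.finrank (ZMod 2) (Submodule.span (ZMod 2) C)

/-- The dimension of the kernel of a binary code. -/
noncomputable def kerDim {α β : ℕ} (C : Set (Bin α β)) : ℕ :=
  Module.finrank (ZMod 2) (Submodule.span (ZMod 2) (kernelK C))

/-- A `Z2Z4`-additive code `C ⊆ Z2^α × Z4^β` is of type `(α,β;γ,δ;κ)`: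
`|C| = 2^(γ+2δ)`, the number of elements `x` with `2x = 0` is `2^(γ+δ)`, and `κ` is the
`Z2`-dimension of the projection onto the first `α` coordinates of `{x ∈ C | 2x = 0}`. -/
def IsTypeOf (α β γ δ κ : ℕ) (C : AddSubgroup (Amb α β)) : Prop :=
  Nat.card C = 2 ^ (γ + 2 * δ) ∧
  Nat.card {x : Amb α β | x ∈ C ∧ 2 • x = 0} = 2 ^ (γ + δ) ∧
  Module.finrank (ZMod 2)
    (Submodule.span (ZMod 2) (Prod.fst '' {x : Amb α β | x ∈ C ∧ 2 • x = 0})) = κ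

-- aux lemmas
lemma grayPair_inj : Function.Injective grayPair := by decide

lemma grayPair_add (y z : ZMod 4) (hy : y + y = 0) :
    grayPair (y + z) = grayPair y + grayPair z := by revert y z; decide

lemma Phi_injective {α β : ℕ} : Function.Injective (Phi (α := α) (β := β)) := by
  intro u v huv
  obtain ⟨h1, h2⟩ := Prod.mk.injEq _ _ _ _ ▸ huv
  exact Prod.ext h1 (funext fun i => grayPair_inj (congrFun h2 i))

lemma grayPair_zero : grayPair 0 = 0 := by decide

lemma Phi_zero {α β : ℕ} : Phi (0 : Amb α β) = 0 := by
  unfold Phi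
  exact Prod.ext rfl (funext fun i => grayPair_zero)

lemma Phi_add_of_two {α β : ℕ} (x c : Amb α β) (hx : x + x = 0) :
    Phi (x + c) = Phi x + Phi c := by
  refine Prod.ext rfl (funext fun i => ?_)
  exact grayPair_add _ _ (congrFun (congrArg Prod.snd hx) i)

lemma bin_add_self {α β : ℕ} (x : Bin α β) : x + x = 0 := by
  have h2 : ∀ a : ZMod 2, a + a = 0 := by decide
  refine Prod.ext (funext fun i => h2 _) (funext fun i => Prod.ext (h2 _) (h2 _))

section Kernel
variable {α β : ℕ} {D : Set (Bin α β)}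

lemma add_mem_of_mem_kernel {x c : Bin α β} (hx : x ∈ kernelK D) (hc : c ∈ D) :
    x + c ∈ D := by
  have hx' : (fun y => x + y) '' D = D := hx
  rw [← hx']
  exact ⟨c, hc, rfl⟩

lemma mem_of_mem_kernel (h0 : 0 ∈ D) {x : Bin α β} (hx : x ∈ kernelK D) : x ∈ D := by
  simpa using add_mem_of_mem_kernel hx h0

lemma mem_kernel_of_forall {x : Bin α β} (h : ∀ c ∈ D, x + c ∈ D) : x ∈ kernelK D := by
  have hsub : (fun y => x + y) '' D ⊆ D := by rintro _ ⟨c, hc, rfl⟩; exact h c hc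
  have hinj : Function.Injective (fun y : Bin α β => x + y) := add_right_injective x
  exact Set.eq_of_subset_of_ncard_le hsub
    (le_of_eq (Set.ncard_image_of_injective _ hinj).symm)

lemma kernel_add {x y : Bin α β} (hx : x ∈ kernelK D) (hy : y ∈ kernelK D) :
    x + y ∈ kernelK D := by
  apply mem_kernel_of_forall
  intro c hc
  have h2 : x + (y + c) ∈ D := add_mem_of_mem_kernel hx (add_mem_of_mem_kernel hy hc)
  rwa [← add_assoc] at h2

def kernelSubmodule (D : Set (Bin α β)) : Submodule (ZMod 2) (Bin α β) :=
  AddSubgroup.toZModSubmodule 2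
    { carrier := kernelK D
      zero_mem' := mem_kernel_of_forall (fun c hc => by simpa using hc)
      add_mem' := kernel_add
      neg_mem' := fun {x} hx => by
        have hnx : -x = x := neg_eq_of_add_eq_zero_left (bin_add_self x)
        rwa [hnx] }

lemma kernelSubmodule_coe (D : Set (Bin α β)) :
    (kernelSubmodule D : Set (Bin α β)) = kernelK D := rfl

lemma card_kernel (D : Set (Bin α β)) : Nat.card (kernelK D) = 2 ^ kerDim D := by
  have h1 : Submodule.span (ZMod 2) (kernelK D) = kernelSubmodule D := by
    rw [← kernelSubmodule_coe]; exact Submodule.span_eq _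
  unfold kerDim
  rw [h1]
  have : Fintype (kernelSubmodule D) := Fintype.ofFinite _
  have h2 : Nat.card (kernelK D) = Fintype.card (kernelSubmodule D) := by
    rw [← Nat.card_eq_fintype_card]
    exact Nat.card_congr (Equiv.setCongr (kernelSubmodule_coe D).symm)
  rw [h2, Module.card_eq_pow_finrank (K := ZMod 2), ZMod.card]

end Kernel

/-- `ker(C) ∈ {γ+δ, …, γ+2δ−2} ∪ {γ+2δ}`. -/
theorem kernel_dim_range (α β γ δ κ : ℕ) (C : AddSubgroup (Amb α β))
    (h : IsTypeOf α β γ δ κ C) :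
    γ + δ ≤ kerDim (Phi '' (C : Set (Amb α β))) ∧
      (kerDim (Phi '' (C : Set (Amb α β))) + 2 ≤ γ + 2 * δ ∨
        kerDim (Phi '' (C : Set (Amb α β))) = γ + 2 * δ) := by
  obtain ⟨hcard, hcard2, -⟩ := h
  set D : Set (Bin α β) := Phi '' (C : Set (Amb α β)) with hDdef
  set k : ℕ := kerDim D with hk
  have h0 : (0 : Bin α β) ∈ D := ⟨0, C.zero_mem, Phi_zero⟩
  -- cardinality of D
  have hDcard : Nat.card D = 2 ^ (γ + 2 * δ) := by
    rw [hDdef, Nat.card_image_of_injective Phi_injective, ← hcard]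
    exact Nat.card_congr (Equiv.setCongr rfl)
  have hKcard : Nat.card (kernelK D) = 2 ^ k := card_kernel D
  -- upper bound
  have hKsubD : kernelK D ⊆ D := fun x hx => mem_of_mem_kernel h0 hx
  have hUB : k ≤ γ + 2 * δ := by
    have hle : Nat.card (kernelK D) ≤ Nat.card D := Nat.card_mono (Set.toFinite _) hKsubD
    rw [hKcard, hDcard] at hle
    exact (Nat.pow_le_pow_iff_right (by norm_num)).mp hle
  -- lower bound
  have hLB : γ + δ ≤ k := by
    have hBker : Phi '' {x : Amb α β | x ∈ C ∧ 2 • x = 0} ⊆ kernelK D := by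
      rintro _ ⟨x, ⟨hxC, hx2⟩, rfl⟩
      apply mem_kernel_of_forall
      rintro _ ⟨c, hcC, rfl⟩
      rw [two_nsmul] at hx2
      exact ⟨x + c, C.add_mem hxC hcC, Phi_add_of_two x c hx2⟩
    have hle : Nat.card (Phi '' {x : Amb α β | x ∈ C ∧ 2 • x = 0}) ≤ Nat.card (kernelK D) :=
      Nat.card_mono (Set.toFinite _) hBker
    rw [Nat.card_image_of_injective Phi_injective, hcard2, hKcard] at hle
    exact (Nat.pow_le_pow_iff_right (by norm_num)).mp hle
  refine ⟨hLB, ?_⟩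
  by_contra hne
  push_neg at hne
  obtain ⟨h1, h2⟩ := hne
  have heq : γ + 2 * δ = k + 1 := by omega
  rw [heq] at hDcard
  -- there is v ∈ D \ kernel
  have hlt : (2 : ℕ) ^ k < 2 ^ (k + 1) := Nat.pow_lt_pow_right (by norm_num) (Nat.lt_succ_self k)
  have hex : ∃ v ∈ D, v ∉ kernelK D := by
    by_contra hno
    push_neg at hno
    have hle : Nat.card D ≤ Nat.card (kernelK D) := Nat.card_mono (Set.toFinite _) hno
    rw [hDcard, hKcard] at hle
    omega
  obtain ⟨v, hvD, hvK⟩ := hex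
  set U : Set (Bin α β) := kernelK D ∪ (fun y => v + y) '' kernelK D with hU
  have hUsub : U ⊆ D := by
    rintro x (hx | ⟨kk, hkk, rfl⟩)
    · exact mem_of_mem_kernel h0 hx
    · show v + kk ∈ D
      rw [add_comm]
      exact add_mem_of_mem_kernel hkk hvD
  have hdisj : Disjoint (kernelK D) ((fun y => v + y) '' kernelK D) := by
    rw [Set.disjoint_left]
    rintro x hxK ⟨kk, hkK, rfl⟩
    apply hvK
    have hmem : (v + kk) + kk ∈ kernelK D := kernel_add hxK hkK
    rwa [add_assoc, bin_add_self, add_zero] at hmem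
  have hKn : (kernelK D).ncard = 2 ^ k := by rw [← Nat.card_coe_set_eq]; exact hKcard
  have hcardU : U.ncard = 2 ^ (k + 1) := by
    rw [hU, Set.ncard_union_eq hdisj (Set.toFinite _) (Set.toFinite _),
      Set.ncard_image_of_injective _ (add_right_injective v), hKn, pow_succ]
    omega
  have hDn : D.ncard = 2 ^ (k + 1) := by rw [← Nat.card_coe_set_eq]; exact hDcard
  have hDeq : U = D := Set.eq_of_subset_of_ncard_le hUsub (by rw [hcardU, hDn])
  -- every element of D is in the kernel
  have hall : D ⊆ kernelK D := by
    intro x hxD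
    apply mem_kernel_of_forall
    intro c hcD
    have hxU : x ∈ U := hDeq ▸ hxD
    have hcU : c ∈ U := hDeq ▸ hcD
    rcases hxU with hx | ⟨k1, hk1, rfl⟩
    · exact add_mem_of_mem_kernel hx hcD
    · rcases hcU with hc | ⟨k2, hk2, rfl⟩
      · rw [add_assoc]
        rw [← hDeq]
        exact Or.inr ⟨k1 + c, kernel_add hk1 hc, rfl⟩
      · have hval : (v + k1) + (v + k2) = k1 + k2 := by
          have : (v + k1) + (v + k2) = (v + v) + (k1 + k2) := by abel
          rw [this, bin_add_self, zero_add]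
        rw [hval]
        exact mem_of_mem_kernel h0 (kernel_add hk1 hk2)
  have hle : Nat.card D ≤ Nat.card (kernelK D) := Nat.card_mono (Set.toFinite _) hall
  rw [hDcard, hKcard] at hle
  omega
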